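/- Let K be a field, f a monic polynomial of positive degree in K[X], and A = K[X]/(f) the quotient algebra. Then the trace form of A over K is nondegenerate (equivalently, the discriminant of the power basis (1, x, ..., x^{deg f - 1}) of A over K is nonzero) if and only if the polynomial f is separable. -/

import Mathlib

open Polynomial


-- trace of an element of AdjoinRoot in terms of modByMonic
lemma trace_adjoinRoot_mk {R : Type*} [CommRing R] {f : R[X]} (hf : f.Monic) (g : R[X]) :
    Algebra.trace R (AdjoinRoot f) (AdjoinRoot.mk f g) =
      ∑ i : Fin f.natDegree, ((g * X ^ (i : ℕ)) %ₘ f).coeff i := by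
  rw [Algebra.trace_eq_matrix_trace (AdjoinRoot.powerBasis' hf).basis, Matrix.trace]
  refine Finset.sum_congr rfl fun i _ => ?_
  rw [Matrix.diag_apply, Algebra.leftMulMatrix_eq_repr_mul]
  have hb : (AdjoinRoot.powerBasis' hf).basis i = AdjoinRoot.mk f (X ^ (i : ℕ)) := by
    rw [(AdjoinRoot.powerBasis' hf).basis_eq_pow, AdjoinRoot.powerBasis'_gen, ← AdjoinRoot.mk_X,
      ← map_pow]
  rw [hb, ← map_mul]
  show (AdjoinRoot.powerBasisAux' hf).repr _ i = _
  exact congrArg (fun p => p.coeff (i : ℕ)) (AdjoinRoot.modByMonicHom_mk hf _)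

lemma trace_adjoinRoot_map {K L : Type*} [Field K] [Field L] [Algebra K L] {f : K[X]}
    (hf : f.Monic) (g : K[X]) :
    algebraMap K L (Algebra.trace K (AdjoinRoot f) (AdjoinRoot.mk f g)) =
      Algebra.trace L (AdjoinRoot (f.map (algebraMap K L)))
        (AdjoinRoot.mk _ (g.map (algebraMap K L))) := by
  rw [trace_adjoinRoot_mk hf, trace_adjoinRoot_mk (hf.map (algebraMap K L)), map_sum,
    hf.natDegree_map]
  refine Finset.sum_congr rfl fun i _ => ?_
  rw [← Polynomial.coeff_map, Polynomial.map_modByMonic _ hf, Polynomial.map_mul,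
    Polynomial.map_pow, Polynomial.map_X]

lemma nondeg_iff_map {K L : Type*} [Field K] [Field L] [Algebra K L] {f : K[X]}
    (hf : f.Monic) :
    (Algebra.traceForm K (AdjoinRoot f)).Nondegenerate ↔
      (Algebra.traceForm L (AdjoinRoot (f.map (algebraMap K L)))).Nondegenerate := by
  classical
  set ι := algebraMap K L
  have hnd : (f.map ι).natDegree = f.natDegree := hf.natDegree_map ι
  let b := (AdjoinRoot.powerBasis' hf).basis
  let b' := ((AdjoinRoot.powerBasis' (hf.map ι)).basis).reindex (finCongr hnd)
  rw [LinearMap.BilinForm.nondegenerate_iff_det_ne_zero b,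
    LinearMap.BilinForm.nondegenerate_iff_det_ne_zero b']
  have hM : (LinearMap.BilinForm.toMatrix b (Algebra.traceForm K (AdjoinRoot f))).map ι =
      LinearMap.BilinForm.toMatrix b' (Algebra.traceForm L (AdjoinRoot (f.map ι))) := by
    ext i j
    rw [Matrix.map_apply, LinearMap.BilinForm.toMatrix_apply,
      LinearMap.BilinForm.toMatrix_apply b' _ (i : Fin f.natDegree) (j : Fin f.natDegree),
      Algebra.traceForm_apply, Algebra.traceForm_apply]
    have hb : ∀ k : Fin f.natDegree, b k = AdjoinRoot.mk f (X ^ (k : ℕ)) := fun k => by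
      rw [show b k = _ from (AdjoinRoot.powerBasis' hf).basis_eq_pow k,
        AdjoinRoot.powerBasis'_gen, ← AdjoinRoot.mk_X, ← map_pow]
    have hb' : ∀ k : Fin f.natDegree, b' k = AdjoinRoot.mk (f.map ι) (X ^ (k : ℕ)) := fun k => by
      rw [show b' k = (AdjoinRoot.powerBasis' (hf.map ι)).basis ((finCongr hnd).symm k) from
        Module.Basis.reindex_apply _ _ k,
        (AdjoinRoot.powerBasis' (hf.map ι)).basis_eq_pow ((finCongr hnd).symm k),
        AdjoinRoot.powerBasis'_gen,
        ← AdjoinRoot.mk_X, ← map_pow]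
      rfl
    rw [hb i, hb j, hb' i, hb' j, ← map_mul, ← map_mul, ← pow_add, ← pow_add]
    have := trace_adjoinRoot_map (L := L) hf (X ^ ((i : ℕ) + (j : ℕ)))
    rw [Polynomial.map_pow, Polynomial.map_X] at this
    exact this
  have hdet : algebraMap K L
      (LinearMap.BilinForm.toMatrix b (Algebra.traceForm K (AdjoinRoot f))).det =
      (LinearMap.BilinForm.toMatrix b' (Algebra.traceForm L (AdjoinRoot (f.map ι)))).det := by
    rw [← hM, RingHom.map_det, RingHom.mapMatrix_apply]
    rfl
  constructor
  · intro h h0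
    rw [← hdet] at h0
    exact h ((map_eq_zero_iff _ (algebraMap K L).injective).mp h0)
  · intro h h0
    exact h (by rw [← hdet, h0, map_zero])

lemma tf_nd_iff {K A : Type*} [Field K] [CommRing A] [Algebra K A] :
    (Algebra.traceForm K A).Nondegenerate ↔ (Algebra.traceForm K A).SeparatingLeft :=
  ⟨fun h => h.1, fun h => ⟨h, fun y hy => h y fun x => by
    rw [Algebra.traceForm_apply, mul_comm, ← Algebra.traceForm_apply]; exact hy x⟩⟩

lemma traceForm_nondeg_of_algEquiv {K A B : Type*} [Field K] [CommRing A] [CommRing B]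
    [Algebra K A] [Algebra K B] (e : A ≃ₐ[K] B)
    (h : (Algebra.traceForm K A).Nondegenerate) : (Algebra.traceForm K B).Nondegenerate := by
  rw [tf_nd_iff] at h ⊢
  intro m hm
  have h0 : e.symm m = 0 := by
    refine h _ fun n => ?_
    have := hm (e n)
    rw [Algebra.traceForm_apply] at this ⊢
    rw [← Algebra.trace_eq_of_algEquiv e, map_mul, e.apply_symm_apply]
    exact this
  rw [← e.apply_symm_apply m, h0, map_zero]

lemma traceForm_nondeg_prod {K B C : Type*} [Field K] [CommRing B] [CommRing C]
    [Algebra K B] [Algebra K C] [Module.Finite K B] [Module.Finite K C] :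
    (Algebra.traceForm K (B × C)).Nondegenerate ↔
      (Algebra.traceForm K B).Nondegenerate ∧ (Algebra.traceForm K C).Nondegenerate := by
  rw [tf_nd_iff, tf_nd_iff, tf_nd_iff]
  constructor
  · intro h
    constructor
    · intro m hm
      have := h (m, 0) fun n => by
        have := hm n.1
        rw [Algebra.traceForm_apply] at this ⊢
        rw [Prod.mk_mul_mk, Algebra.trace_prod_apply, zero_mul, map_zero, add_zero]
        exact this
      simpa [Prod.ext_iff] using this
    · intro m hm
      have := h (0, m) fun n => by
        have := hm n.2
        rw [Algebra.traceForm_apply] at this ⊢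
        rw [Prod.mk_mul_mk, Algebra.trace_prod_apply, zero_mul, map_zero, zero_add]
        exact this
      simpa [Prod.ext_iff] using this
  · rintro ⟨hB, hC⟩ m hm
    have h1 : m.1 = 0 := by
      refine hB _ fun n => ?_
      have := hm (n, 0)
      rw [Algebra.traceForm_apply] at this ⊢
      rw [show m * (n, 0) = (m.1 * n, 0) by rw [← Prod.mk.eta (p := m), Prod.mk_mul_mk, mul_zero],
        Algebra.trace_prod_apply, map_zero, add_zero] at this
      exact this
    have h2 : m.2 = 0 := by
      refine hC _ fun n => ?_
      have := hm (0, n)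
      rw [Algebra.traceForm_apply] at this ⊢
      rw [show m * (0, n) = (0, m.2 * n) by rw [← Prod.mk.eta (p := m), Prod.mk_mul_mk, mul_zero],
        Algebra.trace_prod_apply, map_zero, zero_add] at this
      exact this
    rw [← Prod.mk.eta (p := m), h1, h2]; rfl

noncomputable def adjoinRootProdEquiv {K : Type*} [Field K] (g h : K[X]) (hc : IsCoprime g h) :
    AdjoinRoot (g * h) ≃ₐ[K] AdjoinRoot g × AdjoinRoot h := by
  refine AlgEquiv.ofRingEquiv (f := ?_) ?_
  · exact (Ideal.quotEquivOfEq (by rw [Ideal.span_singleton_mul_span_singleton]) :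
      AdjoinRoot (g * h) ≃+* _).trans
      (Ideal.quotientMulEquivQuotientProd _ _
        ((Ideal.isCoprime_span_singleton_iff g h).mpr hc))
  · intro x
    rfl

theorem aux_nd {K : Type*} [Field K] [PerfectField K] :
    ∀ (n : ℕ) (f : K[X]), f.natDegree = n → f.Monic → 0 < f.natDegree →
      ((Algebra.traceForm K (AdjoinRoot f)).Nondegenerate ↔ f.Separable) := by
  intro n
  induction n using Nat.strong_induction_on with
  | _ n IH =>
  rintro f rfl hf hdeg
  have hf0 : f ≠ 0 := hf.ne_zero
  have hfu : ¬IsUnit f := fun hu => by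
    simp [Polynomial.natDegree_eq_zero_of_isUnit hu] at hdeg
  obtain ⟨g, hgmonic, hgirr, hgdvd⟩ : ∃ g : K[X], g.Monic ∧ Irreducible g ∧ g ∣ f := by
    obtain ⟨g0, hg0irr, hg0dvd⟩ := WfDvdMonoid.exists_irreducible_factor hfu hf0
    have hg00 : g0 ≠ 0 := hg0irr.ne_zero
    have hassoc : Associated g0 (g0 * C g0.leadingCoeff⁻¹) :=
      associated_mul_unit_right g0 _
        (isUnit_C.mpr (isUnit_iff_ne_zero.mpr (inv_ne_zero (leadingCoeff_ne_zero.mpr hg00))))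
    exact ⟨g0 * C g0.leadingCoeff⁻¹, monic_mul_leadingCoeff_inv hg00,
      hassoc.irreducible hg0irr, hassoc.dvd_iff_dvd_left.mp hg0dvd⟩
  obtain ⟨h, hfgh⟩ := hgdvd
  have hhmonic : h.Monic := hgmonic.of_mul_monic_left (hfgh ▸ hf)
  have hh0 : h ≠ 0 := hhmonic.ne_zero
  have hgdeg : 0 < g.natDegree := hgirr.natDegree_pos
  have hsum : f.natDegree = g.natDegree + h.natDegree := by
    rw [hfgh, natDegree_mul hgmonic.ne_zero hh0]
  by_cases hdvd : g ∣ h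
  · -- f not squarefree: both sides false
    have hnotsep : ¬f.Separable := fun hs => by
      have hsq := hs.squarefree
      have : g * g ∣ f := by
        rw [hfgh]; exact mul_dvd_mul_left g hdvd
      exact hgirr.not_isUnit (hsq g this)
    have hnotnd : ¬(Algebra.traceForm K (AdjoinRoot f)).Nondegenerate := by
      intro hN
      obtain ⟨k, hk⟩ := hdvd
      have hhlt : h.natDegree < f.natDegree := by omega
      have ha : AdjoinRoot.mk f h ≠ 0 := by
        rw [Ne, AdjoinRoot.mk_eq_zero]
        intro hdvd'
        exact absurd (Polynomial.natDegree_le_of_dvd hdvd' hh0) (by omega)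
      have ha2 : AdjoinRoot.mk f h * AdjoinRoot.mk f h = 0 := by
        rw [← map_mul, AdjoinRoot.mk_eq_zero]
        exact ⟨k, by rw [hfgh, hk]; ring⟩
      refine ha (hN.1 _ fun b => ?_)
      rw [Algebra.traceForm_apply]
      have hnil : IsNilpotent (AdjoinRoot.mk f h * b) := by
        refine ⟨2, ?_⟩
        rw [pow_two]
        calc AdjoinRoot.mk f h * b * (AdjoinRoot.mk f h * b)
            = AdjoinRoot.mk f h * AdjoinRoot.mk f h * (b * b) := by ring
          _ = 0 := by rw [ha2, zero_mul]
      have := Algebra.isNilpotent_trace_of_isNilpotent (R := K) hnil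
      exact this.eq_zero
    exact iff_of_false hnotnd hnotsep
  · have hcop : IsCoprime g h := (hgirr.coprime_iff_not_dvd).mpr hdvd
    by_cases hhdeg : h.natDegree = 0
    · -- f = g irreducible
      have hh1 : h = 1 := hhmonic.natDegree_eq_zero.mp hhdeg
      have hfg : f = g := by rw [hfgh, hh1, mul_one]
      have hfirr : Irreducible f := hfg ▸ hgirr
      haveI : Fact (Irreducible f) := ⟨hfirr⟩
      haveI : Module.Finite K (AdjoinRoot f) := (AdjoinRoot.powerBasis' hf).finite
      haveI : FiniteDimensional K (AdjoinRoot f) := ‹Module.Finite K (AdjoinRoot f)›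
      exact iff_of_true (traceForm_nondegenerate K (AdjoinRoot f))
        (PerfectField.separable_of_irreducible hfirr)
    · have hhdeg' : 0 < h.natDegree := Nat.pos_of_ne_zero hhdeg
      have hglt : g.natDegree < f.natDegree := by omega
      have hhlt : h.natDegree < f.natDegree := by omega
      have IHg := IH g.natDegree hglt g rfl hgmonic hgdeg
      have IHh := IH h.natDegree hhlt h rfl hhmonic hhdeg'
      haveI : Module.Finite K (AdjoinRoot g) := (AdjoinRoot.powerBasis' hgmonic).finite
      haveI : Module.Finite K (AdjoinRoot h) := (AdjoinRoot.powerBasis' hhmonic).finite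
      have e : AdjoinRoot f ≃ₐ[K] AdjoinRoot g × AdjoinRoot h :=
        hfgh ▸ adjoinRootProdEquiv g h hcop
      have hnd : (Algebra.traceForm K (AdjoinRoot f)).Nondegenerate ↔
          (Algebra.traceForm K (AdjoinRoot g)).Nondegenerate ∧
            (Algebra.traceForm K (AdjoinRoot h)).Nondegenerate := by
        constructor
        · intro H
          exact traceForm_nondeg_prod.mp (traceForm_nondeg_of_algEquiv e H)
        · intro H
          exact traceForm_nondeg_of_algEquiv e.symm (traceForm_nondeg_prod.mpr H)
      rw [hnd, IHg, IHh]
      constructor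
      · rintro ⟨hsg, hsh⟩
        rw [hfgh]
        exact hsg.mul hsh hcop
      · intro hs
        exact ⟨hs.of_dvd ⟨h, hfgh⟩, hs.of_dvd ⟨g, by rw [hfgh, mul_comm]⟩⟩

/-- Let `K` be a field, `f` a monic polynomial of positive degree in `K[X]`, and
`A = K[X]/(f)` the quotient algebra. Then the trace form of `A` over `K` is
nondegenerate if and only if `f` is separable. -/
theorem stmt0 {K : Type*} [Field K] (f : Polynomial K) (hf : f.Monic)
    (hdeg : 0 < f.natDegree) :
    (Algebra.traceForm K (AdjoinRoot f)).Nondegenerate ↔ f.Separable := by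
  rw [nondeg_iff_map (L := AlgebraicClosure K) hf]
  have hm : (f.map (algebraMap K (AlgebraicClosure K))).Monic := hf.map _
  have hd : 0 < (f.map (algebraMap K (AlgebraicClosure K))).natDegree := by
    rw [hf.natDegree_map]; exact hdeg
  rw [aux_nd _ _ rfl hm hd]
  exact Polynomial.separable_map (algebraMap K (AlgebraicClosure K))
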